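/- Let k ≥ 1 and let I¹, …, I^k ⊆ [n] be pairwise disjoint nonempty sets. Consider the k × k matrix A over the polynomial ring ℤ[X₁,…,X_n] whose (i, j) entry is Σ_{m ∈ I^i} X_m^{j−1} (with the convention that the first column consists of 1's, interpreting 0-th powers appropriately, i.e., entry (i,1) = 1). Then det(A) is a nonzero polynomial; moreover, its expansion as a sum of monomials contains a monomial with coefficient ±1. -/
import Mathlib


open MvPolynomial

private lemma prod_X_pow_eq_monomial'' {n : ℕ} {ι : Type*} (s : Finset ι) (p : ι → Fin n)
    (e : ι → ℕ) :
    ∏ i ∈ s, (X (p i) : MvPolynomial (Fin n) ℤ) ^ e i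
      = monomial (∑ i ∈ s, Finsupp.single (p i) (e i)) 1 := by
  classical
  induction s using Finset.cons_induction with
  | empty => simp
  | cons a s ha ih =>
      rw [Finset.prod_cons, Finset.sum_cons, ih, X_pow_eq_monomial, monomial_mul, one_mul]

/-- The matrix `A_{I¹,…,I^k}(X)` over `ℤ[X₁,…,X_n]`: entry `(i, j)` is `1` if `j = 0`
and `Σ_{m ∈ Iⁱ} X_m^j` otherwise. For pairwise disjoint nonempty sets `I¹,…,I^k`
its determinant is nonzero, and its monomial expansion contains a monomial with
coefficient `±1`. -/
theorem stmt6 (n k : ℕ) (hk : 1 ≤ k) (I : Fin k → Finset (Fin n))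
    (hne : ∀ i, (I i).Nonempty)
    (hdisj : ∀ i j, i ≠ j → Disjoint (I i) (I j)) :
    (Matrix.det (Matrix.of fun (i j : Fin k) =>
        if (j : ℕ) = 0 then (1 : MvPolynomial (Fin n) ℤ)
        else ∑ m ∈ I i, (X m) ^ (j : ℕ))) ≠ 0 ∧
    ∃ d : Fin n →₀ ℕ,
      (Matrix.det (Matrix.of fun (i j : Fin k) =>
        if (j : ℕ) = 0 then (1 : MvPolynomial (Fin n) ℤ)
        else ∑ m ∈ I i, (X m) ^ (j : ℕ))).coeff d = 1 ∨
      (Matrix.det (Matrix.of fun (i j : Fin k) =>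
        if (j : ℕ) = 0 then (1 : MvPolynomial (Fin n) ℤ)
        else ∑ m ∈ I i, (X m) ^ (j : ℕ))).coeff d = -1 := by
  classical
  haveI : NeZero k := ⟨by omega⟩
  set M : Matrix (Fin k) (Fin k) (MvPolynomial (Fin n) ℤ) :=
    Matrix.of fun (i j : Fin k) =>
      if (j : ℕ) = 0 then (1 : MvPolynomial (Fin n) ℤ)
      else ∑ m ∈ I i, (X m) ^ (j : ℕ) with hMdef
  obtain ⟨m, hm⟩ : ∃ m : Fin k → Fin n, ∀ i, m i ∈ I i :=
    ⟨fun i => (hne i).choose, fun i => (hne i).choose_spec⟩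
  have hminj : Function.Injective m := by
    intro i j h
    by_contra hij
    exact Finset.disjoint_left.mp (hdisj i j hij) (hm i) (h ▸ hm j)
  set d : Fin n →₀ ℕ := ∑ i : Fin k, Finsupp.single (m i) (i : ℕ) with hddef
  -- value of sums of singles at a point, for injective index functions
  have happ : ∀ (p : Fin k → Fin n), Function.Injective p → ∀ j : Fin k,
      (∑ i : Fin k, Finsupp.single (p i) (i : ℕ)) (p j) = (j : ℕ) := by
    intro p hp j
    rw [Finsupp.finset_sum_apply]
    rw [Finset.sum_eq_single j]
    · simp [Finsupp.single_apply]
    · intro i _ hij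
      rw [Finsupp.single_apply, if_neg (fun h => hij (hp h))]
    · simp
  -- the auxiliary column-indexed family of index sets for each permutation
  set T : Equiv.Perm (Fin k) → Fin k → Finset (Fin n) :=
    fun σ i => if (i : ℕ) = 0 then {m (σ i)} else I (σ i) with hTdef
  have hTsub : ∀ σ i, T σ i ⊆ I (σ i) := by
    intro σ i v hv
    simp only [hTdef] at hv
    split at hv
    · simp only [Finset.mem_singleton] at hv; exact hv ▸ hm (σ i)
    · exact hv
  have hMT : ∀ (σ : Equiv.Perm (Fin k)) (i : Fin k),
      M (σ i) i = ∑ v ∈ T σ i, X v ^ (i : ℕ) := by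
    intro σ i
    simp only [hMdef, hTdef, Matrix.of_apply]
    split
    · next h => simp [h]
    · rfl
  -- key uniqueness claim
  have uniq : ∀ (σ : Equiv.Perm (Fin k)) (p : Fin k → Fin n),
      p ∈ Fintype.piFinset (T σ) →
      (∑ i : Fin k, Finsupp.single (p i) (i : ℕ)) = d → σ = 1 ∧ p = m := by
    intro σ p hp heq
    have hpT : ∀ i, p i ∈ T σ i := Fintype.mem_piFinset.mp hp
    have hpI : ∀ i, p i ∈ I (σ i) := fun i => hTsub σ i (hpT i)
    have hpinj : Function.Injective p := by
      intro i j h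
      by_contra hij
      exact Finset.disjoint_left.mp (hdisj (σ i) (σ j) (fun hs => hij (σ.injective hs)))
        (hpI i) (h ▸ hpI j)
    -- for j with (j:ℕ) ≠ 0, p j = m j
    have hpm : ∀ j : Fin k, (j : ℕ) ≠ 0 → p j = m j := by
      intro j hj
      have h1 : d (p j) = (j : ℕ) := by rw [← heq]; exact happ p hpinj j
      -- d (p j) = ∑ i, if m i = p j then i else 0
      by_cases hex : ∃ i, m i = p j
      · obtain ⟨i₀, hi₀⟩ := hex
        have : d (p j) = (i₀ : ℕ) := by rw [← hi₀]; exact happ m hminj i₀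
        have hij : (i₀ : ℕ) = (j : ℕ) := by rw [← this, h1]
        have : i₀ = j := Fin.ext hij
        rw [← hi₀, this]
      · exfalso
        push_neg at hex
        have : d (p j) = 0 := by
          rw [hddef, Finsupp.finset_sum_apply]
          apply Finset.sum_eq_zero
          intro i _
          simp [Finsupp.single_apply, hex i]
        omega
    -- σ fixes every j with (j:ℕ) ≠ 0
    have hσfix : ∀ j : Fin k, (j : ℕ) ≠ 0 → σ j = j := by
      intro j hj
      by_contra hs
      exact Finset.disjoint_left.mp (hdisj (σ j) j hs) ((hpm j hj) ▸ hpI j) (hm j)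
    have hσ0 : σ 0 = 0 := by
      by_contra hs
      have h0 : ((σ 0 : Fin k) : ℕ) ≠ 0 := fun h => hs (Fin.ext h)
      have := hσfix (σ 0) h0
      exact hs (σ.injective this)
    have hσ : σ = 1 := by
      ext j
      by_cases hj : (j : ℕ) = 0
      · have : j = 0 := Fin.ext hj
        simp [this, hσ0]
      · simp [hσfix j hj]
    refine ⟨hσ, funext fun j => ?_⟩
    by_cases hj : (j : ℕ) = 0
    · have hj0 : j = 0 := Fin.ext hj
      subst hj0
      have h0 := hpT 0
      rw [hσ] at h0
      simp [hTdef] at h0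
      exact h0
    · exact hpm j hj
  -- coefficient of the product for each permutation
  have hcoeffP : ∀ σ : Equiv.Perm (Fin k),
      coeff d (∏ i, M (σ i) i) = if σ = 1 then 1 else 0 := by
    intro σ
    have hprod : ∏ i, M (σ i) i
        = ∑ p ∈ Fintype.piFinset (T σ),
            monomial (∑ i : Fin k, Finsupp.single (p i) (i : ℕ)) (1 : ℤ) := by
      simp_rw [hMT σ]
      rw [Finset.prod_univ_sum]
      exact Finset.sum_congr rfl fun p _ => prod_X_pow_eq_monomial'' _ _ _
    rw [hprod, coeff_sum]
    simp_rw [coeff_monomial]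
    by_cases hσ : σ = 1
    · rw [if_pos hσ]
      subst hσ
      have hmmem : m ∈ Fintype.piFinset (T 1) := by
        rw [Fintype.mem_piFinset]
        intro i
        simp only [hTdef, Equiv.Perm.coe_one, id_eq]
        split
        · exact Finset.mem_singleton_self _
        · exact hm i
      rw [Finset.sum_eq_single_of_mem m hmmem]
      · rw [if_pos rfl]
      · intro p hp hpm
        rw [if_neg]
        intro heq
        exact hpm ((uniq 1 p hp heq).2)
    · rw [if_neg hσ]
      apply Finset.sum_eq_zero
      intro p hp
      rw [if_neg]
      intro heq
      exact hσ (uniq σ p hp heq).1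
  have key : coeff d M.det = 1 := by
    rw [Matrix.det_apply, coeff_sum]
    simp_rw [coeff_smul, hcoeffP]
    rw [Finset.sum_eq_single_of_mem (1 : Equiv.Perm (Fin k)) (Finset.mem_univ _)]
    · simp
    · intro σ _ hσ
      rw [if_neg hσ, smul_zero]
  have hdet : coeff d M.det = 1 := key
  constructor
  · intro h
    rw [h] at hdet
    simp at hdet
  · exact ⟨d, Or.inl hdet⟩
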